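/- For every integer j ≥ 1 and every real θ ≥ 2·ln 2, j²·e^{−θ(j−1)} ≤ ((1 − e^{−θj})/(1 − e^{−θ}))², and hence j²·e^{−θj}/(1 − e^{−θj})² ≤ e^{−θ}/(1 − e^{−θ})². -/

import Mathlib

open Real

lemma aux_nat_le_pow (n : ℕ) : n + 1 ≤ 2 ^ n :=
  by have := Nat.lt_two_pow_self (n := n); omega

/-- Core comparison inequality for the Mallows expected-distance analysis. -/
theorem stmt_6 (j : ℕ) (hj : 1 ≤ j) (θ : ℝ) (hθ : 2 * Real.log 2 ≤ θ) :
    (j : ℝ) ^ 2 * Real.exp (-θ * ((j : ℝ) - 1))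
        ≤ ((1 - Real.exp (-θ * j)) / (1 - Real.exp (-θ))) ^ 2
      ∧ (j : ℝ) ^ 2 * Real.exp (-θ * j) / (1 - Real.exp (-θ * j)) ^ 2
        ≤ Real.exp (-θ) / (1 - Real.exp (-θ)) ^ 2 := by
  have hlog2 : (0:ℝ) < Real.log 2 := Real.log_pos (by norm_num)
  have hθ0 : 0 < θ := by linarith
  have hj1 : (1:ℝ) ≤ (j:ℝ) := by exact_mod_cast hj
  have hB : Real.exp (-θ) < 1 := Real.exp_lt_one_iff.mpr (by linarith)
  have hB0 : 0 < Real.exp (-θ) := Real.exp_pos _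
  have hA : Real.exp (-θ * j) < 1 := Real.exp_lt_one_iff.mpr (by nlinarith)
  have hA0 : 0 < Real.exp (-θ * j) := Real.exp_pos _
  have hAB : Real.exp (-θ * j) ≤ Real.exp (-θ) := Real.exp_le_exp.mpr (by nlinarith)
  -- key : j^2 * exp(-θ(j-1)) ≤ 1
  set n := j - 1 with hn
  have hjn : (j:ℝ) - 1 = (n : ℝ) := by
    have : j = n + 1 := by omega
    rw [this]; push_cast; ring
  have hje : (j:ℝ) ≤ 2 ^ n := by
    have := aux_nat_le_pow n
    have hjn' : j = n + 1 := by omega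
    calc (j:ℝ) = ((n+1 : ℕ):ℝ) := by rw [hjn']
      _ ≤ ((2^n : ℕ):ℝ) := by exact_mod_cast this
      _ = 2 ^ n := by push_cast; ring
  have hexp : (4:ℝ) ^ n ≤ Real.exp (θ * n) := by
    have h1 : Real.exp (2 * Real.log 2 * n) ≤ Real.exp (θ * n) := by
      apply Real.exp_le_exp.mpr
      have : (0:ℝ) ≤ (n:ℝ) := Nat.cast_nonneg n
      nlinarith
    have h2 : Real.exp (2 * Real.log 2 * n) = 4 ^ n := by
      rw [show 2 * Real.log 2 * (n:ℝ) = (n:ℝ) * (2 * Real.log 2) by ring,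
        Real.exp_nat_mul]
      congr 1
      rw [show 2 * Real.log 2 = Real.log 2 + Real.log 2 by ring, Real.exp_add,
        Real.exp_log (by norm_num : (0:ℝ) < 2)]
      norm_num
    linarith
  have key : (j:ℝ) ^ 2 * Real.exp (-θ * ((j : ℝ) - 1)) ≤ 1 := by
    rw [hjn]
    have hE : Real.exp (-θ * n) = (Real.exp (θ * n))⁻¹ := by
      rw [← Real.exp_neg]; ring_nf
    rw [hE, inv_eq_one_div, mul_one_div, div_le_one (Real.exp_pos _)]
    have h4 : (2:ℝ)^n * 2^n = 4^n := by rw [← mul_pow]; norm_num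
    nlinarith
  have hratio : 1 ≤ (1 - Real.exp (-θ * j)) / (1 - Real.exp (-θ)) := by
    rw [le_div_iff₀ (by linarith)]
    linarith
  constructor
  · calc (j : ℝ) ^ 2 * Real.exp (-θ * ((j : ℝ) - 1)) ≤ 1 := key
      _ ≤ ((1 - Real.exp (-θ * j)) / (1 - Real.exp (-θ))) ^ 2 := by nlinarith
  · rw [div_le_div_iff₀ (by nlinarith) (by nlinarith)]
    have hsplit : Real.exp (-θ * j) = Real.exp (-θ) * Real.exp (-θ * ((j:ℝ) - 1)) := by
      rw [← Real.exp_add]; ring_nf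
    have hE0 : 0 < Real.exp (-θ * ((j:ℝ) - 1)) := Real.exp_pos _
    have hfirst : (j:ℝ)^2 * Real.exp (-θ * ((j:ℝ)-1)) * (1 - Real.exp (-θ))^2
        ≤ (1 - Real.exp (-θ * j))^2 := by
      have h1 : ((1 - Real.exp (-θ * j)) / (1 - Real.exp (-θ))) ^ 2
          = (1 - Real.exp (-θ * j))^2 / (1 - Real.exp (-θ))^2 := by
        rw [div_pow]
      have h2 := calc (j : ℝ) ^ 2 * Real.exp (-θ * ((j : ℝ) - 1)) ≤ 1 := key
        _ ≤ ((1 - Real.exp (-θ * j)) / (1 - Real.exp (-θ))) ^ 2 := by nlinarith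
      rw [h1, le_div_iff₀ (by nlinarith)] at h2
      linarith
    nlinarith [sq_nonneg (1 - Real.exp (-θ * j)), hB0.le]
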